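/- With the notation of the context, for every particle array v ∈ Z^{T·M} and every index path k ∈ {1,…,M}^T one has (π⊗Φ)(v) · b(k | v) = (π⊗Φ)(s_{1,k}(v)) · b(k | s_{1,k}(v)); that is, the joint density of the conditional SMC particles together with the backward-sampling probability of the path k is invariant under swapping the conditioned path v^{(𝟏)} with the path v^{(k)}. -/

import Mathlib

open MeasureTheory Finset

namespace SSM15

variable {Z : Type*}

/-- The path `v^{(k)}` extracted from the particle array `v`. -/
def pathOf (n m : ℕ) (v : Fin (n + 1) → Fin (m + 1) → Z)
    (k : Fin (n + 1) → Fin (m + 1)) : Fin (n + 1) → Z := fun t => v t (k t)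

/-- The constant index path `𝟏`. -/
def onePath (n m : ℕ) : Fin (n + 1) → Fin (m + 1) := fun _ => 0

/-- The swap operator `s_{1,k}`. -/
def swapArr (n m : ℕ) (k : Fin (n + 1) → Fin (m + 1))
    (v : Fin (n + 1) → Fin (m + 1) → Z) : Fin (n + 1) → Fin (m + 1) → Z :=
  fun t i => v t (Equiv.swap 0 (k t) i)

/-- The unnormalised target density `γ(z)`. -/
noncomputable def gammaSSM (n : ℕ) (m₀ : Z → ℝ) (f : Z → Z → ℝ)
    (w : Fin (n + 1) → Z → ℝ) (z : Fin (n + 1) → Z) : ℝ :=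
  m₀ (z 0) * (∏ t : Fin n, f (z t.castSucc) (z t.succ)) * ∏ t, w t (z t)

/-- The backward-sampling probabilities `b(k|v)`. -/
noncomputable def bBack (n m : ℕ) (f : Z → Z → ℝ) (w : Fin (n + 1) → Z → ℝ)
    (k : Fin (n + 1) → Fin (m + 1)) (v : Fin (n + 1) → Fin (m + 1) → Z) : ℝ :=
  (w (Fin.last n) (v (Fin.last n) (k (Fin.last n))) /
      ∑ i, w (Fin.last n) (v (Fin.last n) i)) *
    ∏ t : Fin n,
      (w t.castSucc (v t.castSucc (k t.castSucc)) *
          f (v t.castSucc (k t.castSucc)) (v t.succ (k t.succ))) /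
        ∑ i, w t.castSucc (v t.castSucc i) * f (v t.castSucc i) (v t.succ (k t.succ))

/-- The conditional-SMC density `(π⊗Φ)(v)`, with `π = γ/C`. -/
noncomputable def piPhi (n m : ℕ) (m₀ : Z → ℝ) (f : Z → Z → ℝ)
    (w : Fin (n + 1) → Z → ℝ) (C : ℝ) (v : Fin (n + 1) → Fin (m + 1) → Z) : ℝ :=
  (gammaSSM n m₀ f w (pathOf n m v (onePath n m)) / C) *
    (∏ i ∈ univ.erase (0 : Fin (m + 1)), m₀ (v 0 i)) *
    ∏ t : Fin n, ∏ i ∈ univ.erase (0 : Fin (m + 1)),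
      (∑ j, w t.castSucc (v t.castSucc j) * f (v t.castSucc j) (v t.succ i)) /
        ∑ j, w t.castSucc (v t.castSucc j)

set_option maxHeartbeats 2000000 in
/-- Canonical (manifestly swap-symmetric) form of `piPhi · bBack`. -/
lemma expand_piPhi_bBack (n m : ℕ) (m₀ : Z → ℝ) (f : Z → Z → ℝ)
    (w : Fin (n + 1) → Z → ℝ)
    (hfpos : ∀ z z', 0 < f z z') (hwpos : ∀ t z, 0 < w t z)
    (C : ℝ) (hC : C ≠ 0)
    (v : Fin (n + 1) → Fin (m + 1) → Z) (k : Fin (n + 1) → Fin (m + 1)) :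
    piPhi n m m₀ f w C v * bBack n m f w k v =
      1 / C * (∏ i, m₀ (v 0 i)) *
        (w (Fin.last n) (v (Fin.last n) 0) *
            w (Fin.last n) (v (Fin.last n) (k (Fin.last n))) /
          ∑ i, w (Fin.last n) (v (Fin.last n) i)) *
        ∏ t : Fin n,
          (w t.castSucc (v t.castSucc 0) *
              w t.castSucc (v t.castSucc (k t.castSucc)) *
              f (v t.castSucc 0) (v t.succ 0) *
              f (v t.castSucc (k t.castSucc)) (v t.succ (k t.succ)) *
              ∏ i, ∑ j, w t.castSucc (v t.castSucc j) *
                f (v t.castSucc j) (v t.succ i)) /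
            ((∑ j, w t.castSucc (v t.castSucc j)) ^ m *
              (∑ j, w t.castSucc (v t.castSucc j) * f (v t.castSucc j) (v t.succ 0)) *
              ∑ j, w t.castSucc (v t.castSucc j) *
                f (v t.castSucc j) (v t.succ (k t.succ))) := by
  have hSpos : ∀ t : Fin (n + 1), (0 : ℝ) < ∑ i, w t (v t i) :=
    fun t => Finset.sum_pos (fun i _ => hwpos _ _) Finset.univ_nonempty
  have hNpos : ∀ (t : Fin n) (i : Fin (m + 1)),
      (0 : ℝ) < ∑ j, w t.castSucc (v t.castSucc j) * f (v t.castSucc j) (v t.succ i) :=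
    fun t i => Finset.sum_pos (fun j _ => mul_pos (hwpos _ _) (hfpos _ _))
      Finset.univ_nonempty
  have key : ∀ t : Fin n,
      f (v t.castSucc 0) (v t.succ 0) * w t.castSucc (v t.castSucc 0) *
        (∏ i ∈ univ.erase (0 : Fin (m + 1)),
          (∑ j, w t.castSucc (v t.castSucc j) * f (v t.castSucc j) (v t.succ i)) /
            ∑ j, w t.castSucc (v t.castSucc j)) *
        ((w t.castSucc (v t.castSucc (k t.castSucc)) *
            f (v t.castSucc (k t.castSucc)) (v t.succ (k t.succ))) /
          ∑ i, w t.castSucc (v t.castSucc i) * f (v t.castSucc i) (v t.succ (k t.succ)))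
      = (w t.castSucc (v t.castSucc 0) *
            w t.castSucc (v t.castSucc (k t.castSucc)) *
            f (v t.castSucc 0) (v t.succ 0) *
            f (v t.castSucc (k t.castSucc)) (v t.succ (k t.succ)) *
            ∏ i, ∑ j, w t.castSucc (v t.castSucc j) *
              f (v t.castSucc j) (v t.succ i)) /
          ((∑ j, w t.castSucc (v t.castSucc j)) ^ m *
            (∑ j, w t.castSucc (v t.castSucc j) * f (v t.castSucc j) (v t.succ 0)) *
            ∑ j, w t.castSucc (v t.castSucc j) *
              f (v t.castSucc j) (v t.succ (k t.succ))) := by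
    intro t
    have hcard : (Finset.univ.erase (0 : Fin (m + 1))).card = m := by simp
    rw [Finset.prod_div_distrib, Finset.prod_const, hcard,
      ← Finset.mul_prod_erase Finset.univ
        (fun i => ∑ j, w t.castSucc (v t.castSucc j) * f (v t.castSucc j) (v t.succ i))
        (Finset.mem_univ 0)]
    have h1 : (∑ j, w t.castSucc (v t.castSucc j)) ≠ 0 := (hSpos t.castSucc).ne'
    have h2 : (∑ j, w t.castSucc (v t.castSucc j) * f (v t.castSucc j) (v t.succ 0)) ≠ 0 :=
      (hNpos t 0).ne'
    have h3 : (∑ j, w t.castSucc (v t.castSucc j) *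
        f (v t.castSucc j) (v t.succ (k t.succ))) ≠ 0 := (hNpos t (k t.succ)).ne'
    field_simp
  have combine :
      (∏ t : Fin n, f (v t.castSucc 0) (v t.succ 0)) *
        (∏ t : Fin n, w t.castSucc (v t.castSucc 0)) *
        (∏ t : Fin n, ∏ i ∈ univ.erase (0 : Fin (m + 1)),
          (∑ j, w t.castSucc (v t.castSucc j) * f (v t.castSucc j) (v t.succ i)) /
            ∑ j, w t.castSucc (v t.castSucc j)) *
        (∏ t : Fin n,
          (w t.castSucc (v t.castSucc (k t.castSucc)) *
              f (v t.castSucc (k t.castSucc)) (v t.succ (k t.succ))) /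
            ∑ i, w t.castSucc (v t.castSucc i) * f (v t.castSucc i) (v t.succ (k t.succ)))
      = ∏ t : Fin n,
          (w t.castSucc (v t.castSucc 0) *
              w t.castSucc (v t.castSucc (k t.castSucc)) *
              f (v t.castSucc 0) (v t.succ 0) *
              f (v t.castSucc (k t.castSucc)) (v t.succ (k t.succ)) *
              ∏ i, ∑ j, w t.castSucc (v t.castSucc j) *
                f (v t.castSucc j) (v t.succ i)) /
            ((∑ j, w t.castSucc (v t.castSucc j)) ^ m *
              (∑ j, w t.castSucc (v t.castSucc j) * f (v t.castSucc j) (v t.succ 0)) *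
              ∑ j, w t.castSucc (v t.castSucc j) *
                f (v t.castSucc j) (v t.succ (k t.succ))) := by
    rw [← Finset.prod_mul_distrib, ← Finset.prod_mul_distrib, ← Finset.prod_mul_distrib]
    exact Finset.prod_congr rfl fun t _ => key t
  rw [← combine]
  simp only [piPhi, bBack, gammaSSM, pathOf, onePath]
  rw [Fin.prod_univ_castSucc (f := fun t : Fin (n + 1) => w t (v t 0)),
    ← Finset.mul_prod_erase Finset.univ (fun i => m₀ (v 0 i)) (Finset.mem_univ 0)]
  have hSl : (∑ i, w (Fin.last n) (v (Fin.last n) i)) ≠ 0 := (hSpos (Fin.last n)).ne'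
  field_simp

/-- For every particle array `v` and index path `k`,
`(π⊗Φ)(v) · b(k|v) = (π⊗Φ)(s_{1,k}(v)) · b(k|s_{1,k}(v))`. -/
theorem cSMC_swap_invariance
    [MeasurableSpace Z] (ν : Measure Z) [SigmaFinite ν] (n m : ℕ)
    (m₀ : Z → ℝ) (f : Z → Z → ℝ) (w : Fin (n + 1) → Z → ℝ)
    (hm₀ : Measurable m₀) (hf : Measurable fun p : Z × Z => f p.1 p.2)
    (hw : ∀ t, Measurable (w t))
    (hm₀pos : ∀ z, 0 < m₀ z) (hfpos : ∀ z z', 0 < f z z') (hwpos : ∀ t z, 0 < w t z)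
    (C : ℝ)
    (hC : C = ∫ z, gammaSSM n m₀ f w z ∂(Measure.pi fun _ : Fin (n + 1) => ν))
    (hCpos : 0 < C)
    (hCint : Integrable (gammaSSM n m₀ f w) (Measure.pi fun _ : Fin (n + 1) => ν))
    (v : Fin (n + 1) → Fin (m + 1) → Z) (k : Fin (n + 1) → Fin (m + 1)) :
    piPhi n m m₀ f w C v * bBack n m f w k v
      = piPhi n m m₀ f w C (swapArr n m k v) *
          bBack n m f w k (swapArr n m k v) := by
  rw [expand_piPhi_bBack n m m₀ f w hfpos hwpos C hCpos.ne' v k,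
    expand_piPhi_bBack n m m₀ f w hfpos hwpos C hCpos.ne' (swapArr n m k v) k]
  have h0 : ∀ t : Fin (n + 1), swapArr n m k v t 0 = v t (k t) := fun t => by
    simp [swapArr]
  have hk : ∀ t : Fin (n + 1), swapArr n m k v t (k t) = v t 0 := fun t => by
    simp [swapArr]
  have hSsum : ∀ t : Fin (n + 1),
      (∑ i, w t (swapArr n m k v t i)) = ∑ i, w t (v t i) := fun t =>
    Equiv.sum_comp (Equiv.swap 0 (k t)) (fun j => w t (v t j))
  have hM : (∏ i, m₀ (swapArr n m k v 0 i)) = ∏ i, m₀ (v 0 i) :=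
    Equiv.prod_comp (Equiv.swap 0 (k 0)) (fun j => m₀ (v 0 j))
  congr 1
  · rw [hM, hSsum, h0, hk]
    ring
  · refine Finset.prod_congr rfl fun t _ => ?_
    have hNv : ∀ i : Fin (m + 1),
        (∑ j, w t.castSucc (swapArr n m k v t.castSucc j) *
            f (swapArr n m k v t.castSucc j) (swapArr n m k v t.succ i))
          = ∑ j, w t.castSucc (v t.castSucc j) *
              f (v t.castSucc j) (v t.succ (Equiv.swap 0 (k t.succ) i)) := fun i =>
      Equiv.sum_comp (Equiv.swap 0 (k t.castSucc))
        (fun j => w t.castSucc (v t.castSucc j) *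
          f (v t.castSucc j) (v t.succ (Equiv.swap 0 (k t.succ) i)))
    have hSv : (∑ j, w t.castSucc (swapArr n m k v t.castSucc j))
        = ∑ j, w t.castSucc (v t.castSucc j) :=
      Equiv.sum_comp (Equiv.swap 0 (k t.castSucc))
        (fun j => w t.castSucc (v t.castSucc j))
    have hPN : (∏ i, ∑ j, w t.castSucc (v t.castSucc j) *
          f (v t.castSucc j) (v t.succ (Equiv.swap 0 (k t.succ) i)))
        = ∏ i, ∑ j, w t.castSucc (v t.castSucc j) * f (v t.castSucc j) (v t.succ i) :=
      Equiv.prod_comp (Equiv.swap 0 (k t.succ))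
        (fun i => ∑ j, w t.castSucc (v t.castSucc j) * f (v t.castSucc j) (v t.succ i))
    simp only [hNv, hSv]
    simp only [hPN, h0, hk, Equiv.swap_apply_left, Equiv.swap_apply_right]
    ring

end SSM15
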